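/- arXiv:1508.06899 — 2 statements merged into one kernel-verified Lean document; each statement's English description precedes it below -/
import Mathlib

section
/- Paraconsistency of LP→⊥: for every formula A of LP→⊥ in which ⊥ does not occur and every formula B of LP→⊥ in which no propositional variable occurs that occurs in A, if B is not a theorem of LP→⊥ (not ⊢ B), then B is not derivable from {A, ¬A} (not {A, ¬A} ⊢ B). -/
set_option autoImplicit true
set_option maxHeartbeats 1000000

/-- The three truth values of LP→⊥: true, false, both. -/
inductive V3 : Type
  | t
  | f
  | b
  deriving DecidableEq

/-- Formulas of LP→⊥ over propositional variables of type `α`. -/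
inductive Fml (α : Type) : Type
  | var : α → Fml α
  | bot : Fml α
  | neg : Fml α → Fml α
  | conj : Fml α → Fml α → Fml α
  | disj : Fml α → Fml α → Fml α
  | imp : Fml α → Fml α → Fml α

namespace Fml

/-- ⊤ abbreviates ¬⊥. -/
def top {α : Type} : Fml α := neg bot

/-- A↔B abbreviates (A→B)∧(B→A). -/
def iff' {α : Type} (A B : Fml α) : Fml α := conj (imp A B) (imp B A)

end Fml

/-- LP→⊥ truth table for negation. -/
def negT : V3 → V3
  | .f => .t
  | .t => .f
  | .b => .b

/-- LP→⊥ truth table for conjunction. -/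
def conjT : V3 → V3 → V3
  | .f, _ => .f
  | _, .f => .f
  | .t, .t => .t
  | _, _ => .b

/-- LP→⊥ truth table for disjunction. -/
def disjT : V3 → V3 → V3
  | .t, _ => .t
  | _, .t => .t
  | .f, .f => .f
  | _, _ => .b

/-- LP→⊥ truth table for implication. -/
def impT : V3 → V3 → V3
  | .f, _ => .t
  | _, y => y

/-- The LP→⊥ valuation determined by an assignment `σ` of truth values to variables. -/
def eval {α : Type} (σ : α → V3) : Fml α → V3
  | .var x => σ x
  | .bot => .f
  | .neg A => negT (eval σ A)
  | .conj A B => conjT (eval σ A) (eval σ B)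
  | .disj A B => disjT (eval σ A) (eval σ B)
  | .imp A B => impT (eval σ A) (eval σ B)

/-- Logical equivalence in LP→⊥: the same value under every valuation. -/
def FEquiv {α : Type} (A B : Fml α) : Prop := ∀ σ : α → V3, eval σ A = eval σ B

/-- `φ ∈ [⊥]`: `φ` is logically equivalent to ⊥. -/
def EqBot {α : Type} (φ : Fml α) : Prop := ∀ σ : α → V3, eval σ φ = V3.f

/-- Semantic consequence in LP→⊥ (designated values t and b). -/
def SemCons {α : Type} (Γ : Set (Fml α)) (A : Fml α) : Prop :=
  ∀ σ : α → V3, (∀ C ∈ Γ, eval σ C ≠ V3.f) → eval σ A ≠ V3.f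

/-- The Hilbert system of LP→⊥, with hypotheses `Γ`. -/
inductive Hilb {α : Type} (Γ : Set (Fml α)) : Fml α → Prop
  | hyp {A : Fml α} : A ∈ Γ → Hilb Γ A
  | mp {A B : Fml α} : Hilb Γ (A.imp B) → Hilb Γ A → Hilb Γ B
  | ax1 (A B : Fml α) : Hilb Γ (A.imp (B.imp A))
  | ax2 (A B C : Fml α) : Hilb Γ ((A.imp (B.imp C)).imp ((A.imp B).imp (A.imp C)))
  | ax3 (A B : Fml α) : Hilb Γ (((A.imp B).imp A).imp A)
  | ax4 (A : Fml α) : Hilb Γ (Fml.bot.imp A)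
  | ax5 (A B : Fml α) : Hilb Γ ((A.conj B).imp A)
  | ax6 (A B : Fml α) : Hilb Γ ((A.conj B).imp B)
  | ax7 (A B : Fml α) : Hilb Γ (A.imp (B.imp (A.conj B)))
  | ax8 (A B : Fml α) : Hilb Γ (A.imp (A.disj B))
  | ax9 (A B : Fml α) : Hilb Γ (B.imp (A.disj B))
  | ax10 (A B C : Fml α) : Hilb Γ ((A.imp C).imp ((B.imp C).imp ((A.disj B).imp C)))
  | ax11 (A : Fml α) : Hilb Γ (Fml.iff' A.neg.neg A)
  | ax12 (A B : Fml α) : Hilb Γ (Fml.iff' (A.imp B).neg (A.conj B.neg))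
  | ax13 (A B : Fml α) : Hilb Γ (Fml.iff' (A.conj B).neg (A.neg.disj B.neg))
  | ax14 (A B : Fml α) : Hilb Γ (Fml.iff' (A.disj B).neg (A.neg.conj B.neg))
  | ax15 (A : Fml α) : Hilb Γ (A.disj A.neg)

/-- The internalization (A↔B)∧(¬A↔¬B) of logical equivalence. -/
def InternEq {α : Type} (φ ψ : Fml α) : Fml α :=
  (Fml.iff' φ ψ).conj (Fml.iff' φ.neg ψ.neg)

/-- `⊥` does not occur in the formula. -/
def NoBot : Fml ℕ → Prop
  | .var _ => True
  | .bot => False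
  | .neg A => NoBot A
  | .conj A B => NoBot A ∧ NoBot B
  | .disj A B => NoBot A ∧ NoBot B
  | .imp A B => NoBot A ∧ NoBot B

/-- The set of propositional variables occurring in a formula. -/
def varsOf : Fml ℕ → Set ℕ
  | .var x => {x}
  | .bot => ∅
  | .neg A => varsOf A
  | .conj A B => varsOf A ∪ varsOf B
  | .disj A B => varsOf A ∪ varsOf B
  | .imp A B => varsOf A ∪ varsOf B

namespace LPAux

open Fml

variable {α : Type} {Γ : Set (Fml α)} {A B C X Y E : Fml α}

theorem hilb_mono {Γ Γ' : Set (Fml α)} (h : Γ ⊆ Γ') (d : Hilb Γ A) : Hilb Γ' A := by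
  induction d with
  | hyp h' => exact .hyp (h h')
  | mp _ _ ih1 ih2 => exact .mp ih1 ih2
  | ax1 A B => exact .ax1 A B
  | ax2 A B C => exact .ax2 A B C
  | ax3 A B => exact .ax3 A B
  | ax4 A => exact .ax4 A
  | ax5 A B => exact .ax5 A B
  | ax6 A B => exact .ax6 A B
  | ax7 A B => exact .ax7 A B
  | ax8 A B => exact .ax8 A B
  | ax9 A B => exact .ax9 A B
  | ax10 A B C => exact .ax10 A B C
  | ax11 A => exact .ax11 A
  | ax12 A B => exact .ax12 A B
  | ax13 A B => exact .ax13 A B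
  | ax14 A B => exact .ax14 A B
  | ax15 A => exact .ax15 A

theorem wk (h : Hilb Γ A) : Hilb (insert X Γ) A :=
  hilb_mono (Set.subset_insert _ _) h

theorem hypw : Hilb (insert X Γ) X := .hyp (Set.mem_insert _ _)

theorem hilb_id : Hilb Γ (A.imp A) :=
  ((Hilb.ax2 A (A.imp A) A).mp (Hilb.ax1 A (A.imp A))).mp (Hilb.ax1 A A)

theorem w1 (h : Hilb Γ B) : Hilb Γ (X.imp B) := (Hilb.ax1 _ _).mp h

theorem deduction (d : Hilb (insert X Γ) B) : Hilb Γ (X.imp B) := by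
  induction d with
  | hyp h =>
    rcases Set.mem_insert_iff.mp h with rfl | h
    · exact hilb_id
    · exact w1 (.hyp h)
  | mp _ _ ih1 ih2 => exact ((Hilb.ax2 _ _ _).mp ih1).mp ih2
  | ax1 A B => exact w1 (.ax1 A B)
  | ax2 A B C => exact w1 (.ax2 A B C)
  | ax3 A B => exact w1 (.ax3 A B)
  | ax4 A => exact w1 (.ax4 A)
  | ax5 A B => exact w1 (.ax5 A B)
  | ax6 A B => exact w1 (.ax6 A B)
  | ax7 A B => exact w1 (.ax7 A B)
  | ax8 A B => exact w1 (.ax8 A B)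
  | ax9 A B => exact w1 (.ax9 A B)
  | ax10 A B C => exact w1 (.ax10 A B C)
  | ax11 A => exact w1 (.ax11 A)
  | ax12 A B => exact w1 (.ax12 A B)
  | ax13 A B => exact w1 (.ax13 A B)
  | ax14 A B => exact w1 (.ax14 A B)
  | ax15 A => exact w1 (.ax15 A)

theorem imp_trans (h1 : Hilb Γ (A.imp B)) (h2 : Hilb Γ (B.imp C)) : Hilb Γ (A.imp C) :=
  deduction ((wk h2).mp ((wk h1).mp hypw))

theorem conj_intro (h1 : Hilb Γ A) (h2 : Hilb Γ B) : Hilb Γ (A.conj B) :=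
  ((Hilb.ax7 A B).mp h1).mp h2

theorem iff_mp (h : Hilb Γ (Fml.iff' A B)) : Hilb Γ (A.imp B) := (Hilb.ax5 _ _).mp h
theorem iff_mpr (h : Hilb Γ (Fml.iff' A B)) : Hilb Γ (B.imp A) := (Hilb.ax6 _ _).mp h

theorem caseSplit (hX : Hilb Γ (X.imp B)) (hNX : Hilb Γ ((X.imp .bot).imp B)) :
    Hilb Γ B := by
  refine (Hilb.ax3 B .bot).mp ?_
  apply deduction
  exact (wk hNX).mp (imp_trans (wk hX) hypw)

theorem dne_bot : Hilb Γ (((E.imp .bot).imp .bot).imp E) := by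
  apply deduction
  exact (Hilb.ax3 E .bot).mp (imp_trans hypw (Hilb.ax4 E))

theorem neg_of_nbot (h : Hilb Γ (X.imp .bot)) : Hilb Γ X.neg :=
  (((Hilb.ax10 X X.neg X.neg).mp (imp_trans h (Hilb.ax4 _))).mp hilb_id).mp (Hilb.ax15 X)

theorem nn_intro (h : Hilb Γ X) : Hilb Γ X.neg.neg := (iff_mpr (Hilb.ax11 X)).mp h
theorem nn_elim (h : Hilb Γ X.neg.neg) : Hilb Γ X := (iff_mp (Hilb.ax11 X)).mp h

/-- value descriptions -/
def isT (X : Fml α) : Fml α := X.conj (X.neg.imp .bot)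
def isF (X : Fml α) : Fml α := X.imp .bot
def isB (X : Fml α) : Fml α := X.conj X.neg

def rep (X : Fml α) : V3 → Fml α
  | .t => isT X
  | .f => isF X
  | .b => isB X

def fact (Γ : Set (Fml α)) (X : Fml α) : V3 → Prop
  | .f => Hilb Γ (X.imp .bot)
  | _ => Hilb Γ X

theorem fact_rep {v : V3} (h : Hilb Γ (rep X v)) :
    fact Γ X v ∧ fact Γ X.neg (negT v) := by
  cases v with
  | t => exact ⟨(Hilb.ax5 _ _).mp h, (Hilb.ax6 _ _).mp h⟩
  | f => exact ⟨h, neg_of_nbot h⟩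
  | b => exact ⟨(Hilb.ax5 _ _).mp h, (Hilb.ax6 _ _).mp h⟩

theorem fact_neg {u : V3} (h : fact Γ X u ∧ fact Γ X.neg (negT u)) :
    fact Γ X.neg (negT u) ∧ fact Γ X.neg.neg (negT (negT u)) := by
  refine ⟨h.2, ?_⟩
  cases u with
  | t => exact nn_intro h.1
  | f => exact imp_trans (iff_mp (Hilb.ax11 X)) h.1
  | b => exact nn_intro h.1

end LPAux
namespace LPAux

open Fml

variable {α : Type} {Γ : Set (Fml α)} {A B C X Y E : Fml α}

-- conjunction helpers
theorem cP (h1 : Hilb Γ X) (h2 : Hilb Γ Y) : Hilb Γ (X.conj Y) := conj_intro h1 h2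
theorem cNl (h : Hilb Γ (X.imp .bot)) : Hilb Γ ((X.conj Y).imp .bot) :=
  imp_trans (Hilb.ax5 _ _) h
theorem cNr (h : Hilb Γ (Y.imp .bot)) : Hilb Γ ((X.conj Y).imp .bot) :=
  imp_trans (Hilb.ax6 _ _) h
theorem cnPl (h : Hilb Γ X.neg) : Hilb Γ (X.conj Y).neg :=
  (iff_mpr (Hilb.ax13 X Y)).mp ((Hilb.ax8 X.neg Y.neg).mp h)
theorem cnPr (h : Hilb Γ Y.neg) : Hilb Γ (X.conj Y).neg :=
  (iff_mpr (Hilb.ax13 X Y)).mp ((Hilb.ax9 X.neg Y.neg).mp h)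
theorem cnN (h1 : Hilb Γ (X.neg.imp .bot)) (h2 : Hilb Γ (Y.neg.imp .bot)) :
    Hilb Γ ((X.conj Y).neg.imp .bot) :=
  imp_trans (iff_mp (Hilb.ax13 X Y)) (((Hilb.ax10 _ _ _).mp h1).mp h2)

theorem fact_conj {u v : V3} (hX : fact Γ X u ∧ fact Γ X.neg (negT u))
    (hY : fact Γ Y v ∧ fact Γ Y.neg (negT v)) :
    fact Γ (X.conj Y) (conjT u v) ∧ fact Γ (X.conj Y).neg (negT (conjT u v)) := by
  obtain ⟨hX1, hX2⟩ := hX; obtain ⟨hY1, hY2⟩ := hY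
  cases u <;> cases v
  · exact ⟨cP hX1 hY1, cnN hX2 hY2⟩
  · exact ⟨cNr hY1, cnPr hY2⟩
  · exact ⟨cP hX1 hY1, cnPr hY2⟩
  · exact ⟨cNl hX1, cnPl hX2⟩
  · exact ⟨cNl hX1, cnPl hX2⟩
  · exact ⟨cNl hX1, cnPl hX2⟩
  · exact ⟨cP hX1 hY1, cnPl hX2⟩
  · exact ⟨cNr hY1, cnPr hY2⟩
  · exact ⟨cP hX1 hY1, cnPl hX2⟩

-- disjunction helpers
theorem dPl (h : Hilb Γ X) : Hilb Γ (X.disj Y) := (Hilb.ax8 _ _).mp h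
theorem dPr (h : Hilb Γ Y) : Hilb Γ (X.disj Y) := (Hilb.ax9 _ _).mp h
theorem dN (h1 : Hilb Γ (X.imp .bot)) (h2 : Hilb Γ (Y.imp .bot)) :
    Hilb Γ ((X.disj Y).imp .bot) := ((Hilb.ax10 _ _ _).mp h1).mp h2
theorem dnP (h1 : Hilb Γ X.neg) (h2 : Hilb Γ Y.neg) : Hilb Γ (X.disj Y).neg :=
  (iff_mpr (Hilb.ax14 X Y)).mp (conj_intro h1 h2)
theorem dnNl (h : Hilb Γ (X.neg.imp .bot)) : Hilb Γ ((X.disj Y).neg.imp .bot) :=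
  imp_trans (iff_mp (Hilb.ax14 X Y)) (imp_trans (Hilb.ax5 _ _) h)
theorem dnNr (h : Hilb Γ (Y.neg.imp .bot)) : Hilb Γ ((X.disj Y).neg.imp .bot) :=
  imp_trans (iff_mp (Hilb.ax14 X Y)) (imp_trans (Hilb.ax6 _ _) h)

theorem fact_disj {u v : V3} (hX : fact Γ X u ∧ fact Γ X.neg (negT u))
    (hY : fact Γ Y v ∧ fact Γ Y.neg (negT v)) :
    fact Γ (X.disj Y) (disjT u v) ∧ fact Γ (X.disj Y).neg (negT (disjT u v)) := by
  obtain ⟨hX1, hX2⟩ := hX; obtain ⟨hY1, hY2⟩ := hY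
  cases u <;> cases v
  · exact ⟨dPl hX1, dnNl hX2⟩
  · exact ⟨dPl hX1, dnNl hX2⟩
  · exact ⟨dPl hX1, dnNl hX2⟩
  · exact ⟨dPr hY1, dnNr hY2⟩
  · exact ⟨dN hX1 hY1, dnP hX2 hY2⟩
  · exact ⟨dPr hY1, dnP hX2 hY2⟩
  · exact ⟨dPr hY1, dnNr hY2⟩
  · exact ⟨dPl hX1, dnP hX2 hY2⟩
  · exact ⟨dPl hX1, dnP hX2 hY2⟩

-- implication helpers
theorem iPr (h : Hilb Γ Y) : Hilb Γ (X.imp Y) := w1 h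
theorem iPl (h : Hilb Γ (X.imp .bot)) : Hilb Γ (X.imp Y) := imp_trans h (Hilb.ax4 Y)
theorem iN (h1 : Hilb Γ X) (h2 : Hilb Γ (Y.imp .bot)) : Hilb Γ ((X.imp Y).imp .bot) :=
  deduction ((wk h2).mp (hypw.mp (wk h1)))
theorem inP (h1 : Hilb Γ X) (h2 : Hilb Γ Y.neg) : Hilb Γ (X.imp Y).neg :=
  (iff_mpr (Hilb.ax12 X Y)).mp (conj_intro h1 h2)
theorem inNl (h : Hilb Γ (X.imp .bot)) : Hilb Γ ((X.imp Y).neg.imp .bot) :=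
  imp_trans (iff_mp (Hilb.ax12 X Y)) (imp_trans (Hilb.ax5 _ _) h)
theorem inNr (h : Hilb Γ (Y.neg.imp .bot)) : Hilb Γ ((X.imp Y).neg.imp .bot) :=
  imp_trans (iff_mp (Hilb.ax12 X Y)) (imp_trans (Hilb.ax6 _ _) h)

theorem fact_imp {u v : V3} (hX : fact Γ X u ∧ fact Γ X.neg (negT u))
    (hY : fact Γ Y v ∧ fact Γ Y.neg (negT v)) :
    fact Γ (X.imp Y) (impT u v) ∧ fact Γ (X.imp Y).neg (negT (impT u v)) := by
  obtain ⟨hX1, hX2⟩ := hX; obtain ⟨hY1, hY2⟩ := hY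
  cases u <;> cases v
  · exact ⟨iPr hY1, inNr hY2⟩
  · exact ⟨iN hX1 hY1, inP hX1 hY2⟩
  · exact ⟨iPr hY1, inP hX1 hY2⟩
  · exact ⟨iPl hX1, inNl hX1⟩
  · exact ⟨iPl hX1, inNl hX1⟩
  · exact ⟨iPl hX1, inNl hX1⟩
  · exact ⟨iPr hY1, inNr hY2⟩
  · exact ⟨iN hX1 hY1, inP hX1 hY2⟩
  · exact ⟨iPr hY1, inP hX1 hY2⟩

end LPAux
namespace LPAux

open Fml

variable {α : Type} {Γ : Set (Fml α)} {A B C X Y E : Fml α}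

def varlist : Fml α → List α
  | .var x => [x]
  | .bot => []
  | .neg A => varlist A
  | .conj A B => varlist A ++ varlist B
  | .disj A B => varlist A ++ varlist B
  | .imp A B => varlist A ++ varlist B

theorem kal (σ : α → V3) (Γ : Set (Fml α)) :
    ∀ D : Fml α, (∀ p ∈ varlist D, rep (Fml.var p) (σ p) ∈ Γ) →
      fact Γ D (eval σ D) ∧ fact Γ D.neg (negT (eval σ D)) := by
  intro D
  induction D with
  | var p =>
    intro h
    exact fact_rep (.hyp (h p (by simp [varlist])))
  | bot =>
    intro _
    exact ⟨hilb_id, neg_of_nbot hilb_id⟩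
  | neg A ih =>
    intro h
    exact fact_neg (ih h)
  | conj A B ihA ihB =>
    intro h
    exact fact_conj (ihA fun p hp => h p (by simp [varlist, hp]))
      (ihB fun p hp => h p (by simp [varlist, hp]))
  | disj A B ihA ihB =>
    intro h
    exact fact_disj (ihA fun p hp => h p (by simp [varlist, hp]))
      (ihB fun p hp => h p (by simp [varlist, hp]))
  | imp A B ihA ihB =>
    intro h
    exact fact_imp (ihA fun p hp => h p (by simp [varlist, hp]))
      (ihB fun p hp => h p (by simp [varlist, hp]))

/-- three-way case split on the value of `E` -/
theorem tri (hT : Hilb Γ ((isT E).imp B)) (hF : Hilb Γ ((isF E).imp B))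
    (hBb : Hilb Γ ((isB E).imp B)) : Hilb Γ B := by
  refine caseSplit hF ?_
  apply deduction
  have hE : Hilb (insert ((E.imp .bot).imp .bot) Γ) E := dne_bot.mp hypw
  refine caseSplit (X := E.neg.imp .bot) ?_ ?_
  · apply deduction
    exact (wk (wk hT)).mp (conj_intro (wk hE) hypw)
  · apply deduction
    exact (wk (wk hBb)).mp (conj_intro (wk hE) (dne_bot.mp hypw))

def hypSet (σ : α → V3) (L : List α) : Set (Fml α) :=
  {F | ∃ p ∈ L, F = rep (Fml.var p) (σ p)}

theorem elim [DecidableEq α] (B : Fml α) :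
    ∀ L : List α, L.Nodup → (∀ σ : α → V3, Hilb (hypSet σ L) B) →
      Hilb (∅ : Set (Fml α)) B := by
  intro L
  induction L with
  | nil =>
    intro _ h
    refine hilb_mono ?_ (h fun _ => .t)
    rintro F ⟨p, hp, _⟩
    exact absurd hp List.not_mem_nil
  | cons p L ih =>
    intro hnd h
    have hpL : p ∉ L := (List.nodup_cons.mp hnd).1
    refine ih (List.nodup_cons.mp hnd).2 ?_
    intro σ
    have key : ∀ v : V3, Hilb (hypSet σ L) ((rep (Fml.var p) v).imp B) := by
      intro v
      apply deduction
      refine hilb_mono ?_ (h (Function.update σ p v))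
      rintro F ⟨q, hq, rfl⟩
      rcases List.mem_cons.mp hq with rfl | hq'
      · rw [Function.update_self]
        exact Set.mem_insert _ _
      · have : q ≠ p := fun hqp => hpL (hqp ▸ hq')
        rw [Function.update_of_ne this]
        exact Set.mem_insert_of_mem _ ⟨q, hq', rfl⟩
    exact tri (key .t) (key .f) (key .b)

end LPAux
namespace LPAux

open Fml

variable {α : Type} {Γ : Set (Fml α)}

theorem sound {A : Fml α} (h : Hilb Γ A) : SemCons Γ A := by
  induction h with
  | hyp h => exact fun σ hΓ => hΓ _ h
  | @mp A' B' _ _ ih1 ih2 =>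
    intro σ hΓ
    have h1 := ih1 σ hΓ; have h2 := ih2 σ hΓ
    simp only [eval] at h1
    revert h1 h2
    cases eval σ A' <;> cases eval σ B' <;> decide
  | ax1 A B => intro σ _; simp only [eval]; cases eval σ A <;> cases eval σ B <;> decide
  | ax2 A B C => intro σ _; simp only [eval]; cases eval σ A <;> cases eval σ B <;> cases eval σ C <;> decide
  | ax3 A B => intro σ _; simp only [eval]; cases eval σ A <;> cases eval σ B <;> decide
  | ax4 A => intro σ _; simp only [eval]; cases eval σ A <;> decide
  | ax5 A B => intro σ _; simp only [eval]; cases eval σ A <;> cases eval σ B <;> decide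
  | ax6 A B => intro σ _; simp only [eval]; cases eval σ A <;> cases eval σ B <;> decide
  | ax7 A B => intro σ _; simp only [eval]; cases eval σ A <;> cases eval σ B <;> decide
  | ax8 A B => intro σ _; simp only [eval]; cases eval σ A <;> cases eval σ B <;> decide
  | ax9 A B => intro σ _; simp only [eval]; cases eval σ A <;> cases eval σ B <;> decide
  | ax10 A B C => intro σ _; simp only [eval]; cases eval σ A <;> cases eval σ B <;> cases eval σ C <;> decide
  | ax11 A => intro σ _; simp only [Fml.iff', eval]; cases eval σ A <;> decide
  | ax12 A B => intro σ _; simp only [Fml.iff', eval]; cases eval σ A <;> cases eval σ B <;> decide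
  | ax13 A B => intro σ _; simp only [Fml.iff', eval]; cases eval σ A <;> cases eval σ B <;> decide
  | ax14 A B => intro σ _; simp only [Fml.iff', eval]; cases eval σ A <;> cases eval σ B <;> decide
  | ax15 A => intro σ _; simp only [eval]; cases eval σ A <;> decide

theorem eval_congr {C : Fml ℕ} {σ σ' : ℕ → V3}
    (h : ∀ x ∈ varsOf C, σ x = σ' x) : eval σ C = eval σ' C := by
  induction C with
  | var x => exact h x rfl
  | bot => rfl
  | neg A ih => simp only [eval]; rw [ih h]
  | conj A B ihA ihB =>
    simp only [eval]
    rw [ihA fun x hx => h x (Set.mem_union_left _ hx),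
      ihB fun x hx => h x (Set.mem_union_right _ hx)]
  | disj A B ihA ihB =>
    simp only [eval]
    rw [ihA fun x hx => h x (Set.mem_union_left _ hx),
      ihB fun x hx => h x (Set.mem_union_right _ hx)]
  | imp A B ihA ihB =>
    simp only [eval]
    rw [ihA fun x hx => h x (Set.mem_union_left _ hx),
      ihB fun x hx => h x (Set.mem_union_right _ hx)]

theorem eval_allb {A : Fml ℕ} (hA : NoBot A) {σ : ℕ → V3}
    (h : ∀ x ∈ varsOf A, σ x = .b) : eval σ A = .b := by
  induction A with
  | var x => exact h x rfl
  | bot => exact absurd hA id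
  | neg A ih => simp only [eval]; rw [ih hA h]; rfl
  | conj A B ihA ihB =>
    simp only [eval]
    rw [ihA hA.1 fun x hx => h x (Set.mem_union_left _ hx),
      ihB hA.2 fun x hx => h x (Set.mem_union_right _ hx)]
    rfl
  | disj A B ihA ihB =>
    simp only [eval]
    rw [ihA hA.1 fun x hx => h x (Set.mem_union_left _ hx),
      ihB hA.2 fun x hx => h x (Set.mem_union_right _ hx)]
    rfl
  | imp A B ihA ihB =>
    simp only [eval]
    rw [ihA hA.1 fun x hx => h x (Set.mem_union_left _ hx),
      ihB hA.2 fun x hx => h x (Set.mem_union_right _ hx)]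
    rfl

end LPAux

/-- Paraconsistency of LP→⊥: if ⊥ does not occur in `A`, no variable of `A` occurs
in `B`, and `B` is not a theorem, then `B` is not derivable from `{A, ¬A}`. -/
theorem LP_paraconsistent (A B : Fml ℕ) (hA : NoBot A)
    (hvars : ∀ x, x ∈ varsOf A → x ∉ varsOf B)
    (hB : ¬ Hilb (∅ : Set (Fml ℕ)) B) :
    ¬ Hilb ({A, A.neg} : Set (Fml ℕ)) B := by
  intro h
  classical
  have hs := LPAux.sound h
  -- B is valid
  have hvalid : ∀ σ : ℕ → V3, eval σ B ≠ V3.f := by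
    intro σ
    set σ' : ℕ → V3 := fun x => if x ∈ varsOf A then V3.b else σ x with hσ'
    have hA' : eval σ' A = V3.b := LPAux.eval_allb hA fun x hx => if_pos hx
    have h1 : ∀ C ∈ ({A, A.neg} : Set (Fml ℕ)), eval σ' C ≠ V3.f := by
      intro C hC
      rcases hC with rfl | hC
      · rw [hA']; decide
      · have hCA : C = A.neg := hC
        subst hCA
        show negT (eval σ' A) ≠ V3.f
        rw [hA']; decide
    have h2 := hs σ' h1
    have heq : eval σ B = eval σ' B := by
      apply LPAux.eval_congr
      intro x hx
      have : x ∉ varsOf A := fun hxA => hvars x hxA hx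
      simp [hσ', if_neg this]
    rw [heq]; exact h2
  -- completeness for B
  have hk : ∀ σ : ℕ → V3, Hilb (LPAux.hypSet σ (LPAux.varlist B).dedup) B := by
    intro σ
    have hkal := (LPAux.kal σ (LPAux.hypSet σ (LPAux.varlist B).dedup) B
      (fun p hp => ⟨p, List.mem_dedup.mpr hp, rfl⟩)).1
    rcases h3 : eval σ B with _ | _ | _
    · rw [h3] at hkal; exact hkal
    · exact absurd h3 (hvalid σ)
    · rw [h3] at hkal; exact hkal
  exact hB (LPAux.elim B _ (List.nodup_dedup _) hk)
end

section
/- Internalized logical equivalence in LP→⊥: for all formulas A and B of LP→⊥, A ≡ B (i.e., ν(A)=ν(B) for every three-valued valuation ν) if and only if ⊢ (A↔B)∧(¬A↔¬B) (this formula is a theorem of the Hilbert system of LP→⊥). -/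
set_option autoImplicit true
set_option maxHeartbeats 1000000

instance : Fintype V3 :=
  ⟨{V3.t, V3.f, V3.b}, by intro x; cases x <;> simp⟩

section LPHelpers

variable {α : Type} {Γ Γ' : Set (Fml α)} {A B C P Q G : Fml α}

theorem lpWeaken (hs : Γ ⊆ Γ') (h : Hilb Γ A) : Hilb Γ' A := by
  induction h with
  | hyp h => exact Hilb.hyp (hs h)
  | mp _ _ ih1 ih2 => exact ih1.mp ih2
  | ax1 X Y => exact Hilb.ax1 X Y
  | ax2 X Y Z => exact Hilb.ax2 X Y Z
  | ax3 X Y => exact Hilb.ax3 X Y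
  | ax4 X => exact Hilb.ax4 X
  | ax5 X Y => exact Hilb.ax5 X Y
  | ax6 X Y => exact Hilb.ax6 X Y
  | ax7 X Y => exact Hilb.ax7 X Y
  | ax8 X Y => exact Hilb.ax8 X Y
  | ax9 X Y => exact Hilb.ax9 X Y
  | ax10 X Y Z => exact Hilb.ax10 X Y Z
  | ax11 X => exact Hilb.ax11 X
  | ax12 X Y => exact Hilb.ax12 X Y
  | ax13 X Y => exact Hilb.ax13 X Y
  | ax14 X Y => exact Hilb.ax14 X Y
  | ax15 X => exact Hilb.ax15 X

theorem lpLift (h : Hilb Γ B) : Hilb Γ (A.imp B) := (Hilb.ax1 B A).mp h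

theorem lpId : Hilb Γ (A.imp A) :=
  ((Hilb.ax2 A (A.imp A) A).mp (Hilb.ax1 A (A.imp A))).mp (Hilb.ax1 A A)

theorem lpDed (h : Hilb (insert A Γ) B) : Hilb Γ (A.imp B) := by
  induction h with
  | hyp h =>
    rcases h with rfl | h
    · exact lpId
    · exact lpLift (Hilb.hyp h)
  | mp _ _ ih1 ih2 => exact ((Hilb.ax2 _ _ _).mp ih1).mp ih2
  | ax1 X Y => exact lpLift (Hilb.ax1 X Y)
  | ax2 X Y Z => exact lpLift (Hilb.ax2 X Y Z)
  | ax3 X Y => exact lpLift (Hilb.ax3 X Y)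
  | ax4 X => exact lpLift (Hilb.ax4 X)
  | ax5 X Y => exact lpLift (Hilb.ax5 X Y)
  | ax6 X Y => exact lpLift (Hilb.ax6 X Y)
  | ax7 X Y => exact lpLift (Hilb.ax7 X Y)
  | ax8 X Y => exact lpLift (Hilb.ax8 X Y)
  | ax9 X Y => exact lpLift (Hilb.ax9 X Y)
  | ax10 X Y Z => exact lpLift (Hilb.ax10 X Y Z)
  | ax11 X => exact lpLift (Hilb.ax11 X)
  | ax12 X Y => exact lpLift (Hilb.ax12 X Y)
  | ax13 X Y => exact lpLift (Hilb.ax13 X Y)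
  | ax14 X Y => exact lpLift (Hilb.ax14 X Y)
  | ax15 X => exact lpLift (Hilb.ax15 X)

theorem lpComp (h1 : Hilb Γ (A.imp B)) (h2 : Hilb Γ (B.imp C)) : Hilb Γ (A.imp C) :=
  ((Hilb.ax2 A B C).mp (lpLift h2)).mp h1

theorem lpAndI (h1 : Hilb Γ A) (h2 : Hilb Γ B) : Hilb Γ (A.conj B) :=
  ((Hilb.ax7 A B).mp h1).mp h2

theorem lpAndE1 (h : Hilb Γ (A.conj B)) : Hilb Γ A := (Hilb.ax5 A B).mp h

theorem lpAndE2 (h : Hilb Γ (A.conj B)) : Hilb Γ B := (Hilb.ax6 A B).mp h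

theorem lpOrE3 (hx : Hilb Γ (A.imp C)) (hy : Hilb Γ (B.imp C)) :
    Hilb Γ ((A.disj B).imp C) :=
  ((Hilb.ax10 A B C).mp hx).mp hy

theorem lpOrE (h : Hilb Γ (A.disj B)) (hx : Hilb Γ (A.imp C)) (hy : Hilb Γ (B.imp C)) :
    Hilb Γ C :=
  (lpOrE3 hx hy).mp h

theorem lpFromBot (h : Hilb Γ (A.imp Fml.bot)) : Hilb Γ (A.imp C) :=
  lpComp h (Hilb.ax4 C)

theorem lpEmImp : Hilb Γ (A.disj (A.imp Fml.bot)) := by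
  apply (Hilb.ax3 (A.disj (A.imp Fml.bot)) Fml.bot).mp
  apply lpDed
  have hP : Hilb (insert ((A.disj (A.imp Fml.bot)).imp Fml.bot) Γ)
      ((A.disj (A.imp Fml.bot)).imp Fml.bot) := Hilb.hyp (Set.mem_insert _ _)
  exact (Hilb.ax9 A (A.imp Fml.bot)).mp (lpComp (Hilb.ax8 A (A.imp Fml.bot)) hP)

theorem lpMpBot (hP : Hilb Γ P) (hQ : Hilb Γ (Q.imp Fml.bot)) :
    Hilb Γ ((P.imp Q).imp Fml.bot) := by
  apply lpDed
  have w : Γ ⊆ insert (P.imp Q) Γ := Set.subset_insert _ _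
  exact (lpWeaken w hQ).mp ((Hilb.hyp (Set.mem_insert _ _)).mp (lpWeaken w hP))

theorem lpNotBot : Hilb Γ Fml.bot.neg :=
  lpOrE (Hilb.ax15 Fml.bot) (Hilb.ax4 _) lpId

/-- The syntactic description of "C has value v". -/
def Dv {α : Type} (C : Fml α) : V3 → Fml α
  | .t => C.conj (C.neg.imp Fml.bot)
  | .f => C.neg.conj (C.imp Fml.bot)
  | .b => C.conj C.neg

/-- Variables occurring in a formula. -/
def fvars {α : Type} : Fml α → List α
  | .var x => [x]
  | .bot => []
  | .neg A => fvars A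
  | .conj A B => fvars A ++ fvars B
  | .disj A B => fvars A ++ fvars B
  | .imp A B => fvars A ++ fvars B

theorem lpThreeCases (P : Fml α) :
    Hilb Γ ((Dv P .t).disj ((Dv P .f).disj (Dv P .b))) := by
  refine lpOrE (Hilb.ax15 P) (lpDed ?_) (lpDed ?_)
  · refine lpOrE (lpEmImp (A := P.neg)) (lpDed ?_) (lpDed ?_)
    · -- have P, ¬P : case b
      exact (Hilb.ax9 _ _).mp ((Hilb.ax9 _ _).mp
        (lpAndI (Hilb.hyp (by simp)) (Hilb.hyp (by simp))))
    · -- have P, ¬P→⊥ : case t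
      exact (Hilb.ax8 _ _).mp (lpAndI (Hilb.hyp (by simp)) (Hilb.hyp (by simp)))
  · refine lpOrE (lpEmImp (A := P)) (lpDed ?_) (lpDed ?_)
    · -- have ¬P, P : case b
      exact (Hilb.ax9 _ _).mp ((Hilb.ax9 _ _).mp
        (lpAndI (Hilb.hyp (by simp)) (Hilb.hyp (by simp))))
    · -- have ¬P, P→⊥ : case f
      exact (Hilb.ax9 _ _).mp ((Hilb.ax8 _ _).mp
        (lpAndI (Hilb.hyp (by simp)) (Hilb.hyp (by simp))))

theorem lpKalmar (σ : α → V3) (C : Fml α)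
    (hΓ : ∀ x ∈ fvars C, Dv (Fml.var x) (σ x) ∈ Γ) :
    Hilb Γ (Dv C (eval σ C)) := by
  induction C with
  | var x => exact Hilb.hyp (hΓ x (by simp [fvars]))
  | bot => exact lpAndI lpNotBot lpId
  | neg P ih =>
    have h := ih hΓ
    cases hv : eval σ P <;> rw [hv] at h <;> simp only [eval, hv, negT]
    · -- value t : goal Dv ¬P f
      exact lpAndI (lpAndE2 (Hilb.ax11 P) |>.mp (lpAndE1 h)) (lpAndE2 h)
    · -- value f : goal Dv ¬P t
      exact lpAndI (lpAndE1 h) (lpComp (lpAndE1 (Hilb.ax11 P)) (lpAndE2 h))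
    · -- value b
      exact lpAndI (lpAndE2 h) ((lpAndE2 (Hilb.ax11 P)).mp (lpAndE1 h))
  | conj P Q ih1 ih2 =>
    have h1 := ih1 (fun x hx => hΓ x (by simp only [fvars]; exact List.mem_append.mpr (Or.inl hx)))
    have h2 := ih2 (fun x hx => hΓ x (by simp only [fvars]; exact List.mem_append.mpr (Or.inr hx)))
    cases hv : eval σ P <;> cases hw : eval σ Q <;>
      rw [hv] at h1 <;> rw [hw] at h2 <;> simp only [eval, hv, hw, conjT]
    · -- t t
      exact lpAndI (lpAndI (lpAndE1 h1) (lpAndE1 h2))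
        (lpComp (lpAndE1 (Hilb.ax13 P Q)) (lpOrE3 (lpAndE2 h1) (lpAndE2 h2)))
    · -- t f
      exact lpAndI ((lpAndE2 (Hilb.ax13 P Q)).mp ((Hilb.ax9 _ _).mp (lpAndE1 h2)))
        (lpComp (Hilb.ax6 P Q) (lpAndE2 h2))
    · -- t b
      exact lpAndI (lpAndI (lpAndE1 h1) (lpAndE1 h2))
        ((lpAndE2 (Hilb.ax13 P Q)).mp ((Hilb.ax9 _ _).mp (lpAndE2 h2)))
    · -- f t
      exact lpAndI ((lpAndE2 (Hilb.ax13 P Q)).mp ((Hilb.ax8 _ _).mp (lpAndE1 h1)))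
        (lpComp (Hilb.ax5 P Q) (lpAndE2 h1))
    · -- f f
      exact lpAndI ((lpAndE2 (Hilb.ax13 P Q)).mp ((Hilb.ax8 _ _).mp (lpAndE1 h1)))
        (lpComp (Hilb.ax5 P Q) (lpAndE2 h1))
    · -- f b
      exact lpAndI ((lpAndE2 (Hilb.ax13 P Q)).mp ((Hilb.ax8 _ _).mp (lpAndE1 h1)))
        (lpComp (Hilb.ax5 P Q) (lpAndE2 h1))
    · -- b t
      exact lpAndI (lpAndI (lpAndE1 h1) (lpAndE1 h2))
        ((lpAndE2 (Hilb.ax13 P Q)).mp ((Hilb.ax8 _ _).mp (lpAndE2 h1)))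
    · -- b f
      exact lpAndI ((lpAndE2 (Hilb.ax13 P Q)).mp ((Hilb.ax9 _ _).mp (lpAndE1 h2)))
        (lpComp (Hilb.ax6 P Q) (lpAndE2 h2))
    · -- b b
      exact lpAndI (lpAndI (lpAndE1 h1) (lpAndE1 h2))
        ((lpAndE2 (Hilb.ax13 P Q)).mp ((Hilb.ax8 _ _).mp (lpAndE2 h1)))
  | disj P Q ih1 ih2 =>
    have h1 := ih1 (fun x hx => hΓ x (by simp only [fvars]; exact List.mem_append.mpr (Or.inl hx)))
    have h2 := ih2 (fun x hx => hΓ x (by simp only [fvars]; exact List.mem_append.mpr (Or.inr hx)))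
    cases hv : eval σ P <;> cases hw : eval σ Q <;>
      rw [hv] at h1 <;> rw [hw] at h2 <;> simp only [eval, hv, hw, disjT]
    · -- t t
      exact lpAndI ((Hilb.ax8 _ _).mp (lpAndE1 h1))
        (lpComp (lpAndE1 (Hilb.ax14 P Q)) (lpComp (Hilb.ax5 _ _) (lpAndE2 h1)))
    · -- t f
      exact lpAndI ((Hilb.ax8 _ _).mp (lpAndE1 h1))
        (lpComp (lpAndE1 (Hilb.ax14 P Q)) (lpComp (Hilb.ax5 _ _) (lpAndE2 h1)))
    · -- t b
      exact lpAndI ((Hilb.ax8 _ _).mp (lpAndE1 h1))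
        (lpComp (lpAndE1 (Hilb.ax14 P Q)) (lpComp (Hilb.ax5 _ _) (lpAndE2 h1)))
    · -- f t
      exact lpAndI ((Hilb.ax9 _ _).mp (lpAndE1 h2))
        (lpComp (lpAndE1 (Hilb.ax14 P Q)) (lpComp (Hilb.ax6 _ _) (lpAndE2 h2)))
    · -- f f
      exact lpAndI ((lpAndE2 (Hilb.ax14 P Q)).mp (lpAndI (lpAndE1 h1) (lpAndE1 h2)))
        (lpOrE3 (lpAndE2 h1) (lpAndE2 h2))
    · -- f b
      exact lpAndI ((Hilb.ax9 _ _).mp (lpAndE1 h2))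
        ((lpAndE2 (Hilb.ax14 P Q)).mp (lpAndI (lpAndE1 h1) (lpAndE2 h2)))
    · -- b t
      exact lpAndI ((Hilb.ax9 _ _).mp (lpAndE1 h2))
        (lpComp (lpAndE1 (Hilb.ax14 P Q)) (lpComp (Hilb.ax6 _ _) (lpAndE2 h2)))
    · -- b f
      exact lpAndI ((Hilb.ax8 _ _).mp (lpAndE1 h1))
        ((lpAndE2 (Hilb.ax14 P Q)).mp (lpAndI (lpAndE2 h1) (lpAndE1 h2)))
    · -- b b
      exact lpAndI ((Hilb.ax8 _ _).mp (lpAndE1 h1))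
        ((lpAndE2 (Hilb.ax14 P Q)).mp (lpAndI (lpAndE2 h1) (lpAndE2 h2)))
  | imp P Q ih1 ih2 =>
    have h1 := ih1 (fun x hx => hΓ x (by simp only [fvars]; exact List.mem_append.mpr (Or.inl hx)))
    have h2 := ih2 (fun x hx => hΓ x (by simp only [fvars]; exact List.mem_append.mpr (Or.inr hx)))
    cases hv : eval σ P <;> cases hw : eval σ Q <;>
      rw [hv] at h1 <;> rw [hw] at h2 <;> simp only [eval, hv, hw, impT]
    · -- t t
      exact lpAndI (lpLift (lpAndE1 h2))
        (lpComp (lpAndE1 (Hilb.ax12 P Q)) (lpComp (Hilb.ax6 _ _) (lpAndE2 h2)))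
    · -- t f
      exact lpAndI ((lpAndE2 (Hilb.ax12 P Q)).mp (lpAndI (lpAndE1 h1) (lpAndE1 h2)))
        (lpMpBot (lpAndE1 h1) (lpAndE2 h2))
    · -- t b
      exact lpAndI (lpLift (lpAndE1 h2))
        ((lpAndE2 (Hilb.ax12 P Q)).mp (lpAndI (lpAndE1 h1) (lpAndE2 h2)))
    · -- f t
      exact lpAndI (lpFromBot (lpAndE2 h1))
        (lpComp (lpAndE1 (Hilb.ax12 P Q)) (lpComp (Hilb.ax5 _ _) (lpAndE2 h1)))
    · -- f f
      exact lpAndI (lpFromBot (lpAndE2 h1))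
        (lpComp (lpAndE1 (Hilb.ax12 P Q)) (lpComp (Hilb.ax5 _ _) (lpAndE2 h1)))
    · -- f b
      exact lpAndI (lpFromBot (lpAndE2 h1))
        (lpComp (lpAndE1 (Hilb.ax12 P Q)) (lpComp (Hilb.ax5 _ _) (lpAndE2 h1)))
    · -- b t
      exact lpAndI (lpLift (lpAndE1 h2))
        (lpComp (lpAndE1 (Hilb.ax12 P Q)) (lpComp (Hilb.ax6 _ _) (lpAndE2 h2)))
    · -- b f
      exact lpAndI ((lpAndE2 (Hilb.ax12 P Q)).mp (lpAndI (lpAndE1 h1) (lpAndE1 h2)))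
        (lpMpBot (lpAndE1 h1) (lpAndE2 h2))
    · -- b b
      exact lpAndI (lpLift (lpAndE1 h2))
        ((lpAndE2 (Hilb.ax12 P Q)).mp (lpAndI (lpAndE1 h1) (lpAndE2 h2)))

/-- The hypotheses describing σ on the variables in L. -/
def DSet (L : List α) (σ : α → V3) : Set (Fml α) :=
  {φ | ∃ x ∈ L, φ = Dv (Fml.var x) (σ x)}

theorem lpElim [DecidableEq α] (G : Fml α) :
    ∀ L : List α, L.Nodup → (∀ σ, Hilb (DSet L σ) G) → Hilb (∅ : Set (Fml α)) G := by
  intro L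
  induction L with
  | nil =>
    intro _ h
    refine lpWeaken ?_ (h fun _ => V3.t)
    rintro φ ⟨x, hx, _⟩
    simp at hx
  | cons x L ih =>
    intro hnd h
    obtain ⟨hxL, hndL⟩ := List.nodup_cons.mp hnd
    refine ih hndL ?_
    intro σ
    have key : ∀ v : V3, Hilb (DSet L σ) ((Dv (Fml.var x) v).imp G) := by
      intro v
      apply lpDed
      refine lpWeaken ?_ (h (Function.update σ x v))
      rintro φ ⟨y, hy, rfl⟩
      rcases List.mem_cons.mp hy with rfl | hyL
      · exact Set.mem_insert_iff.mpr (Or.inl (by rw [Function.update_self]))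
      · refine Set.mem_insert_iff.mpr (Or.inr ⟨y, hyL, ?_⟩)
        rw [Function.update_of_ne (by rintro rfl; exact hxL hyL)]
    exact lpOrE (lpThreeCases (Fml.var x)) (key .t) (lpOrE3 (key .f) (key .b))

theorem lpInternFromD (v : V3) (hA : Hilb Γ (Dv A v)) (hB : Hilb Γ (Dv B v)) :
    Hilb Γ (InternEq A B) := by
  cases v with
  | t =>
    exact lpAndI (lpAndI (lpLift (lpAndE1 hB)) (lpLift (lpAndE1 hA)))
      (lpAndI (lpFromBot (lpAndE2 hA)) (lpFromBot (lpAndE2 hB)))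
  | f =>
    exact lpAndI (lpAndI (lpFromBot (lpAndE2 hA)) (lpFromBot (lpAndE2 hB)))
      (lpAndI (lpLift (lpAndE1 hB)) (lpLift (lpAndE1 hA)))
  | b =>
    exact lpAndI (lpAndI (lpLift (lpAndE1 hB)) (lpLift (lpAndE1 hA)))
      (lpAndI (lpLift (lpAndE2 hB)) (lpLift (lpAndE2 hA)))

theorem lpSound (h : Hilb Γ C) (σ : α → V3) (hΓ : ∀ D ∈ Γ, eval σ D ≠ V3.f) :
    eval σ C ≠ V3.f := by
  induction h with
  | hyp h => exact hΓ _ h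
  | @mp X Y _ _ ih1 ih2 =>
    have key : ∀ a b : V3, impT a b ≠ V3.f → a ≠ V3.f → b ≠ V3.f := by decide
    exact key (eval σ X) (eval σ Y) ih1 ih2
  | ax1 X Y =>
    have key : ∀ a b : V3, impT a (impT b a) ≠ V3.f := by decide
    exact key (eval σ X) (eval σ Y)
  | ax2 X Y Z =>
    have key : ∀ a b c : V3,
        impT (impT a (impT b c)) (impT (impT a b) (impT a c)) ≠ V3.f := by decide
    exact key (eval σ X) (eval σ Y) (eval σ Z)
  | ax3 X Y =>
    have key : ∀ a b : V3, impT (impT (impT a b) a) a ≠ V3.f := by decide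
    exact key (eval σ X) (eval σ Y)
  | ax4 X =>
    have key : ∀ a : V3, impT V3.f a ≠ V3.f := by decide
    exact key (eval σ X)
  | ax5 X Y =>
    have key : ∀ a b : V3, impT (conjT a b) a ≠ V3.f := by decide
    exact key (eval σ X) (eval σ Y)
  | ax6 X Y =>
    have key : ∀ a b : V3, impT (conjT a b) b ≠ V3.f := by decide
    exact key (eval σ X) (eval σ Y)
  | ax7 X Y =>
    have key : ∀ a b : V3, impT a (impT b (conjT a b)) ≠ V3.f := by decide
    exact key (eval σ X) (eval σ Y)
  | ax8 X Y =>
    have key : ∀ a b : V3, impT a (disjT a b) ≠ V3.f := by decide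
    exact key (eval σ X) (eval σ Y)
  | ax9 X Y =>
    have key : ∀ a b : V3, impT b (disjT a b) ≠ V3.f := by decide
    exact key (eval σ X) (eval σ Y)
  | ax10 X Y Z =>
    have key : ∀ a b c : V3,
        impT (impT a c) (impT (impT b c) (impT (disjT a b) c)) ≠ V3.f := by decide
    exact key (eval σ X) (eval σ Y) (eval σ Z)
  | ax11 X =>
    have key : ∀ a : V3,
        conjT (impT (negT (negT a)) a) (impT a (negT (negT a))) ≠ V3.f := by decide
    exact key (eval σ X)
  | ax12 X Y =>
    have key : ∀ a b : V3,
        conjT (impT (negT (impT a b)) (conjT a (negT b)))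
          (impT (conjT a (negT b)) (negT (impT a b))) ≠ V3.f := by decide
    exact key (eval σ X) (eval σ Y)
  | ax13 X Y =>
    have key : ∀ a b : V3,
        conjT (impT (negT (conjT a b)) (disjT (negT a) (negT b)))
          (impT (disjT (negT a) (negT b)) (negT (conjT a b))) ≠ V3.f := by decide
    exact key (eval σ X) (eval σ Y)
  | ax14 X Y =>
    have key : ∀ a b : V3,
        conjT (impT (negT (disjT a b)) (conjT (negT a) (negT b)))
          (impT (conjT (negT a) (negT b)) (negT (disjT a b))) ≠ V3.f := by decide
    exact key (eval σ X) (eval σ Y)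
  | ax15 X =>
    have key : ∀ a : V3, disjT a (negT a) ≠ V3.f := by decide
    exact key (eval σ X)

end LPHelpers

/-- Internalized logical equivalence in LP→⊥:
A ≡ B iff ⊢ (A↔B)∧(¬A↔¬B). -/
theorem LP_internalized_equivalence (A B : Fml ℕ) :
    FEquiv A B ↔ Hilb (∅ : Set (Fml ℕ)) (InternEq A B) := by
  constructor
  · intro hEq
    apply lpElim (InternEq A B) ((fvars A ++ fvars B).dedup) (List.nodup_dedup _)
    intro σ
    have hA : Hilb (DSet ((fvars A ++ fvars B).dedup) σ) (Dv A (eval σ A)) :=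
      lpKalmar σ A (fun x hx =>
        ⟨x, List.mem_dedup.mpr (List.mem_append.mpr (Or.inl hx)), rfl⟩)
    have hB : Hilb (DSet ((fvars A ++ fvars B).dedup) σ) (Dv B (eval σ B)) :=
      lpKalmar σ B (fun x hx =>
        ⟨x, List.mem_dedup.mpr (List.mem_append.mpr (Or.inr hx)), rfl⟩)
    refine lpInternFromD (eval σ A) hA ?_
    rw [hEq σ]
    exact hB
  · intro h σ
    have hs : eval σ (InternEq A B) ≠ V3.f :=
      lpSound h σ (fun D hD => absurd hD (Set.notMem_empty _))
    have key : ∀ a b : V3,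
        conjT (conjT (impT a b) (impT b a))
          (conjT (impT (negT a) (negT b)) (impT (negT b) (negT a))) ≠ V3.f → a = b := by
      decide
    exact key (eval σ A) (eval σ B) hs
end
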